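/- Let k ≥ 2 and let u : (0,1) → ℝ be C², bounded from below, such that for all r ∈ (0,1), min(u''(r) + (k-1)u'(r)/r, k·u'(r)/r) ≤ 0. Then there exists r₀ ∈ (0,1) such that u'(r) ≤ 0 for all r ∈ (0,r₀). -/

import Mathlib

open Set

theorem stmt1 (k : ℕ) (hk : 2 ≤ k)
    (u u' u'' : ℝ → ℝ)
    (hu' : ∀ r ∈ Ioo (0:ℝ) 1, HasDerivAt u (u' r) r)
    (hu'' : ∀ r ∈ Ioo (0:ℝ) 1, HasDerivAt u' (u'' r) r)
    (hu''c : ContinuousOn u'' (Ioo (0:ℝ) 1))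
    (hbdd : BddBelow (u '' Ioo (0:ℝ) 1))
    (h : ∀ r ∈ Ioo (0:ℝ) 1,
      min (u'' r + ((k:ℝ) - 1) * u' r / r) ((k:ℝ) * u' r / r) ≤ 0) :
    ∃ r₀ ∈ Ioo (0:ℝ) 1, ∀ r ∈ Ioo (0:ℝ) r₀, u' r ≤ 0 := by
  refine ⟨1/2, by norm_num, ?_⟩
  intro a ha
  by_contra hpos
  push_neg at hpos
  have ha0 : 0 < a := ha.1
  have ha1 : a < 1 := lt_trans ha.2 (by norm_num)
  have haI : a ∈ Ioo (0:ℝ) 1 := ⟨ha0, ha1⟩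
  set g : ℝ → ℝ := fun r => r ^ (k - 1) * u' r with hgdef
  have hg : ∀ r ∈ Ioo (0:ℝ) 1,
      HasDerivAt g (((k:ℝ) - 1) * r ^ (k - 2) * u' r + r ^ (k - 1) * u'' r) r := by
    intro r hr
    have := (hasDerivAt_pow (k - 1) r).mul (hu'' r hr)
    have hke : k - 1 - 1 = k - 2 := by omega
    have hkc : ((k - 1 : ℕ) : ℝ) = (k : ℝ) - 1 := by
      have : (1:ℕ) ≤ k := by omega
      push_cast [Nat.cast_sub this]; ring
    rw [hke, hkc] at this
    exact this
  have hgle : ∀ r ∈ Ioo (0:ℝ) 1, 0 < u' r →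
      ((k:ℝ) - 1) * r ^ (k - 2) * u' r + r ^ (k - 1) * u'' r ≤ 0 := by
    intro r hr hur
    have hr0 : (0:ℝ) < r := hr.1
    have hmin := h r hr
    have hsecond : 0 < (k:ℝ) * u' r / r := by
      apply div_pos _ hr0
      have : (0:ℝ) < (k:ℝ) := by positivity
      exact mul_pos this hur
    have hfirst : u'' r + ((k:ℝ) - 1) * u' r / r ≤ 0 := by
      rcases min_le_iff.mp hmin with h1 | h2
      · exact h1
      · linarith
    have hm : r ^ (k - 1) * (u'' r + ((k:ℝ) - 1) * u' r / r) ≤ 0 :=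
      mul_nonpos_of_nonneg_of_nonpos (by positivity) hfirst
    have hre : r ^ (k - 1) = r ^ (k - 2) * r := by
      rw [← pow_succ]; congr 1; omega
    have heq : ((k:ℝ) - 1) * r ^ (k - 2) * u' r + r ^ (k - 1) * u'' r
        = r ^ (k - 1) * (u'' r + ((k:ℝ) - 1) * u' r / r) := by
      rw [hre]; field_simp; ring
    rw [heq]; exact hm
  -- key antitone fact
  have hanti : ∀ s t : ℝ, 0 < s → s ≤ t → t < 1 →
      (∀ x ∈ Ioo s t, 0 < u' x) → g t ≤ g s := by
    intro s t hs hst ht hpos'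
    have hsub : Icc s t ⊆ Ioo (0:ℝ) 1 := fun x hx =>
      ⟨lt_of_lt_of_le hs hx.1, lt_of_le_of_lt hx.2 ht⟩
    have hcont : ContinuousOn g (Icc s t) := fun x hx =>
      ((hg x (hsub hx)).continuousAt).continuousWithinAt
    have hA : AntitoneOn g (Icc s t) := by
      apply antitoneOn_of_deriv_nonpos (convex_Icc s t) hcont
      · intro x hx
        rw [interior_Icc] at hx
        exact ((hg x (hsub (Ioo_subset_Icc_self hx))).differentiableAt).differentiableWithinAt
      intro x hx
      rw [interior_Icc] at hx
      have hx1 : x ∈ Ioo (0:ℝ) 1 := hsub (Ioo_subset_Icc_self hx)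
      rw [(hg x hx1).deriv]
      exact hgle x hx1 (hpos' x hx)
    exact hA (left_mem_Icc.mpr hst) (right_mem_Icc.mpr hst) hst
  -- Step A: u' > 0 on (0, a]
  have hA : ∀ r ∈ Ioc (0:ℝ) a, 0 < u' r := by
    by_contra hB
    push_neg at hB
    obtain ⟨s₀, hs₀, hs₀'⟩ := hB
    set S := {x ∈ Icc s₀ a | u' x ≤ 0} with hSdef
    have hIccsub : Icc s₀ a ⊆ Ioo (0:ℝ) 1 := fun x hx =>
      ⟨lt_of_lt_of_le hs₀.1 hx.1, lt_of_le_of_lt hx.2 ha1⟩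
    have hu'cont : ContinuousOn u' (Icc s₀ a) := fun x hx =>
      ((hu'' x (hIccsub hx)).continuousAt).continuousWithinAt
    have hSclosed : IsClosed S := by
      have h2 := hu'cont.preimage_isClosed_of_isClosed isClosed_Icc (isClosed_Iic (a := (0:ℝ)))
      have : S = Icc s₀ a ∩ u' ⁻¹' Iic 0 := by
        ext x; simp [hSdef]
      rw [this]; exact h2
    have hScomp : IsCompact S := isCompact_Icc.of_isClosed_subset hSclosed
      (fun x hx => hx.1)
    have hSne : S.Nonempty := ⟨s₀, ⟨left_mem_Icc.mpr hs₀.2, hs₀'⟩⟩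
    set b := sSup S with hbdef
    have hbS : b ∈ S := hScomp.sSup_mem hSne
    have hb0 : 0 < b := lt_of_lt_of_le hs₀.1 hbS.1.1
    have hba : b < a := by
      rcases lt_or_eq_of_le hbS.1.2 with h' | h'
      · exact h'
      · exfalso; rw [h'] at hbS; linarith [hbS.2, hpos]
    have hmid : ∀ x ∈ Ioo b a, 0 < u' x := by
      intro x hx
      by_contra hx'
      push_neg at hx'
      have hxS : x ∈ S := ⟨⟨le_trans hbS.1.1 (le_of_lt hx.1), le_of_lt hx.2⟩, hx'⟩
      have : x ≤ b := le_csSup hScomp.bddAbove hxS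
      linarith [hx.1]
    have hga : g a ≤ g b := hanti b a hb0 (le_of_lt hba) ha1 hmid
    have hga0 : 0 < g a := mul_pos (by positivity) hpos
    have hgb0 : g b ≤ 0 := mul_nonpos_of_nonneg_of_nonpos (by positivity) hbS.2
    linarith
  -- Step B: g r ≥ g a =: c on (0, a], hence u' r ≥ c / r
  set c := g a with hcdef
  have hc0 : 0 < c := mul_pos (by positivity) hpos
  have hB : ∀ r ∈ Ioc (0:ℝ) a, c / r ≤ u' r := by
    intro r hr
    have hr0 : 0 < r := hr.1
    have hcg : c ≤ g r := hanti r a hr0 hr.2 ha1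
      (fun x hx => hA x ⟨lt_trans hr0 hx.1, le_of_lt hx.2⟩)
    have hpow : r ^ (k - 1) ≤ r := by
      have := pow_le_pow_of_le_one (le_of_lt hr0)
        (le_of_lt (lt_of_le_of_lt hr.2 ha1)) (show 1 ≤ k - 1 by omega)
      simpa using this
    have hgr : g r ≤ r * u' r :=
      mul_le_mul_of_nonneg_right hpow (le_of_lt (hA r hr))
    rw [div_le_iff₀ hr0]
    calc c ≤ g r := hcg
      _ ≤ r * u' r := hgr
      _ = u' r * r := by ring
  -- Step C: u ε ≤ (u a - c log a) + c log ε for ε ∈ (0, a)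
  have hC : ∀ ε ∈ Ioo (0:ℝ) a, u ε ≤ (u a - c * Real.log a) + c * Real.log ε := by
    intro ε hε
    set v : ℝ → ℝ := fun r => u r - c * Real.log r with hvdef
    have hεI : Icc ε a ⊆ Ioo (0:ℝ) 1 := fun x hx =>
      ⟨lt_of_lt_of_le hε.1 hx.1, lt_of_le_of_lt hx.2 ha1⟩
    have hv : ∀ x ∈ Ioo (0:ℝ) 1, HasDerivAt v (u' x - c / x) x := by
      intro x hx
      have h1 := (hu' x hx).sub ((Real.hasDerivAt_log (ne_of_gt hx.1)).const_mul c)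
      rw [div_eq_mul_inv]; exact h1
    have hcont : ContinuousOn v (Icc ε a) := fun x hx =>
      ((hv x (hεI hx)).continuousAt).continuousWithinAt
    have hmono : MonotoneOn v (Icc ε a) := by
      apply monotoneOn_of_deriv_nonneg (convex_Icc ε a) hcont
      · intro x hx
        rw [interior_Icc] at hx
        exact ((hv x (hεI (Ioo_subset_Icc_self hx))).differentiableAt).differentiableWithinAt
      intro x hx
      rw [interior_Icc] at hx
      have hx1 : x ∈ Ioo (0:ℝ) 1 := hεI (Ioo_subset_Icc_self hx)
      rw [(hv x hx1).deriv]
      have := hB x ⟨hx1.1, le_of_lt hx.2⟩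
      linarith
    have := hmono (left_mem_Icc.mpr (le_of_lt hε.2))
      (right_mem_Icc.mpr (le_of_lt hε.2)) (le_of_lt hε.2)
    simp only [hvdef] at this
    linarith
  -- Step D: contradiction with boundedness
  obtain ⟨m, hm⟩ := hbdd
  set K := u a - c * Real.log a with hKdef
  set ε := min (a / 2) (Real.exp ((m - K) / c - 1)) with hεdef
  have hε0 : 0 < ε := lt_min (by linarith) (Real.exp_pos _)
  have hεa : ε < a := lt_of_le_of_lt (min_le_left _ _) (by linarith)
  have hεI : ε ∈ Ioo (0:ℝ) 1 := ⟨hε0, lt_trans hεa ha1⟩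
  have hlog : Real.log ε ≤ (m - K) / c - 1 := by
    calc Real.log ε ≤ Real.log (Real.exp ((m - K) / c - 1)) :=
          Real.log_le_log hε0 (min_le_right _ _)
      _ = (m - K) / c - 1 := Real.log_exp _
  have hmle : m ≤ u ε := hm ⟨ε, hεI, rfl⟩
  have huε : u ε ≤ K + c * Real.log ε := hC ε ⟨hε0, hεa⟩
  have : c * Real.log ε ≤ m - K - c := by
    have := mul_le_mul_of_nonneg_left hlog (le_of_lt hc0)
    have h2 : c * ((m - K) / c - 1) = m - K - c := by field_simp
    linarith
  linarith
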